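/- For every integer k ≥ 0 and every real s > 1, the derivative of the ratio T_{k+1}(s)/T_k(s) of Chebyshev polynomials of the first kind is strictly positive; that is, the ratio T_{k+1}/T_k is strictly increasing on (1, ∞). -/

import Mathlib

open Polynomial Polynomial.Chebyshev

private lemma T_chain (s : ℝ) (hs : 1 < s) :
    ∀ k : ℕ, 1 ≤ (Chebyshev.T ℝ k).eval s ∧
      (Chebyshev.T ℝ k).eval s < (Chebyshev.T ℝ (k + 1)).eval s := by
  intro k
  induction k with
  | zero => simp [Chebyshev.T_zero, Chebyshev.T_one]; linarith
  | succ n ih =>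
    obtain ⟨h1, h2⟩ := ih
    have hrec : Chebyshev.T ℝ ((n : ℤ) + 1 + 1) = 2 * X * Chebyshev.T ℝ ((n : ℤ) + 1)
        - Chebyshev.T ℝ n := by
      have := Chebyshev.T_add_two ℝ (n : ℤ)
      convert this using 2 <;> push_cast <;> ring
    constructor
    · push_cast
      linarith
    · push_cast [hrec]
      simp only [eval_sub, eval_mul, eval_ofNat, eval_X]
      nlinarith

private lemma T_pos (s : ℝ) (hs : 1 < s) (k : ℕ) : 0 < (Chebyshev.T ℝ k).eval s := by
  have := (T_chain s hs k).1; linarith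

private lemma W_pos (k : ℕ) (s : ℝ) :
    0 < (derivative (Chebyshev.T ℝ (k + 1))).eval s * (Chebyshev.T ℝ k).eval s
      - (Chebyshev.T ℝ (k + 1)).eval s * (derivative (Chebyshev.T ℝ k)).eval s := by
  induction k with
  | zero => simp [Chebyshev.T_zero, Chebyshev.T_one]
  | succ n ih =>
    have hrec : Chebyshev.T ℝ ((n : ℤ) + 1 + 1) = 2 * X * Chebyshev.T ℝ ((n : ℤ) + 1)
        - Chebyshev.T ℝ n := by
      have := Chebyshev.T_add_two ℝ (n : ℤ)
      convert this using 2 <;> push_cast <;> ring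
    push_cast [hrec] at *
    simp only [derivative_sub, derivative_mul, derivative_X, derivative_ofNat, eval_sub,
      eval_add, eval_mul, eval_ofNat, eval_X, eval_zero, eval_one] at *
    nlinarith [sq_nonneg ((Chebyshev.T ℝ ((n : ℤ) + 1)).eval s)]

/-- The ratio `T_{k+1}/T_k` of Chebyshev polynomials of the first kind has
strictly positive derivative on `(1, ∞)`; that is, it is strictly increasing
on `(1, ∞)`. -/
theorem stmt_6 (k : ℕ) :
    (∀ s : ℝ, 1 < s →
      0 < deriv (fun x => (Chebyshev.T ℝ (k + 1)).eval x / (Chebyshev.T ℝ k).eval x) s) ∧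
    StrictMonoOn (fun x => (Chebyshev.T ℝ (k + 1)).eval x / (Chebyshev.T ℝ k).eval x)
      (Set.Ioi 1) := by
  have hd : ∀ s : ℝ, 1 < s →
      0 < deriv (fun x => (Chebyshev.T ℝ (k + 1)).eval x / (Chebyshev.T ℝ k).eval x) s := by
    intro s hs
    have hq : (Chebyshev.T ℝ k).eval s ≠ 0 := (T_pos s hs k).ne'
    have h : HasDerivAt (fun x => (Chebyshev.T ℝ (k + 1)).eval x / (Chebyshev.T ℝ k).eval x) _ s :=
      ((Chebyshev.T ℝ (k + 1)).hasDerivAt s).div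
      ((Chebyshev.T ℝ k).hasDerivAt s) hq
    rw [h.deriv]
    apply div_pos (W_pos k s)
    positivity
  refine ⟨hd, ?_⟩
  apply strictMonoOn_of_deriv_pos (convex_Ioi 1)
  · apply ContinuousOn.div
    · exact (Polynomial.continuous _).continuousOn
    · exact (Polynomial.continuous _).continuousOn
    · intro x hx; exact (T_pos x hx k).ne'
  · intro x hx
    rw [interior_Ioi] at hx
    exact hd x hx
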